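/- arXiv:0812.4994 — 2 statements merged into one kernel-verified Lean document; each statement's English description precedes it below -/
import Mathlib

section
/- For an odd prime p and nonzero a in F_p, the sum over r_0 in F_p^* and r_1 in F_p of ((-r_0)/p) * psi(-r_1*(a/r_0 + 2)) equals p * ((2a)/p), where psi is a nontrivial additive character of F_p. -/
open Finset

/-- For an odd prime `p`, nonzero `a ∈ 𝔽_p` and a nontrivial additive character `ψ` of `𝔽_p`,
`∑_{r₀ ∈ 𝔽_p^*} ∑_{r₁ ∈ 𝔽_p} ((-r₀)/p) ψ(-r₁(a/r₀ + 2)) = p * ((2a)/p)`,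
where `(·/p)` is the Legendre symbol (the quadratic character of `𝔽_p`). -/
theorem double_sum_legendre (p : ℕ) [Fact p.Prime] (hp : p ≠ 2)
    (a : ZMod p) (ha : a ≠ 0) (ψ : AddChar (ZMod p) ℂ) (hψ : ψ ≠ 1) :
    ∑ r₀ : (ZMod p)ˣ, ∑ r₁ : ZMod p,
        (quadraticChar (ZMod p) (-(r₀ : ZMod p)) : ℂ) * ψ (-r₁ * (a / (r₀ : ZMod p) + 2))
      = (p : ℂ) * (quadraticChar (ZMod p) (2 * a) : ℂ) := by
  classical
  have hprim : ψ.IsPrimitive := AddChar.IsPrimitive.of_ne_one hψ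
  have h2 : (2 : ZMod p) ≠ 0 :=
    Ring.two_ne_zero (by rw [ZMod.ringChar_zmod_n]; exact hp)
  have key : ∀ r₀ : (ZMod p)ˣ,
      ∑ r₁ : ZMod p,
        (quadraticChar (ZMod p) (-(r₀ : ZMod p)) : ℂ) * ψ (-r₁ * (a / (r₀ : ZMod p) + 2))
      = (quadraticChar (ZMod p) (-(r₀ : ZMod p)) : ℂ) *
        (if -(a / (r₀ : ZMod p) + 2) = 0 then (p : ℂ) else 0) := by
    intro r₀
    rw [← Finset.mul_sum]
    congr 1
    have h := AddChar.sum_mulShift (ψ := ψ) (-(a / (r₀ : ZMod p) + 2)) hprim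
    simp_rw [mul_neg, ← neg_mul] at h
    rw [h, ZMod.card]
    split <;> simp
  simp_rw [key]
  have hu : (-(a * 2⁻¹) : ZMod p) ≠ 0 := by
    simp [ha, h2]
  set u : (ZMod p)ˣ := Units.mk0 _ hu with hu_def
  rw [Finset.sum_eq_single u]
  · have huval : (u : ZMod p) = -(a * 2⁻¹) := rfl
    rw [huval]
    have hcond : -(a / (-(a * 2⁻¹)) + 2) = 0 := by
      field_simp
      ring
    rw [if_pos hcond, neg_neg]
    have hχ : quadraticChar (ZMod p) (a * 2⁻¹) = quadraticChar (ZMod p) (2 * a) := by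
      have hsq : quadraticChar (ZMod p) 2 * quadraticChar (ZMod p) 2 = 1 := by
        have := quadraticChar_sq_one (F := ZMod p) h2
        rwa [pow_two] at this
      have hinv : quadraticChar (ZMod p) 2⁻¹ = quadraticChar (ZMod p) 2 := by
        have h1 : quadraticChar (ZMod p) 2⁻¹ * quadraticChar (ZMod p) 2 = 1 := by
          rw [← map_mul, inv_mul_cancel₀ h2, map_one]
        calc quadraticChar (ZMod p) 2⁻¹
            = quadraticChar (ZMod p) 2⁻¹ * (quadraticChar (ZMod p) 2 *
              quadraticChar (ZMod p) 2) := by rw [hsq, mul_one]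
          _ = (quadraticChar (ZMod p) 2⁻¹ * quadraticChar (ZMod p) 2) *
              quadraticChar (ZMod p) 2 := by ring
          _ = quadraticChar (ZMod p) 2 := by rw [h1, one_mul]
      rw [map_mul, map_mul, hinv, mul_comm]
    rw [hχ, mul_comm]
  · intro b _ hb
    have hcond : ¬(-(a / (b : ZMod p) + 2) = 0) := by
      intro h
      apply hb
      have hbne : (b : ZMod p) ≠ 0 := b.ne_zero
      have : a / (b : ZMod p) = -2 := by linear_combination -h
      have hval : (b : ZMod p) = -(a * 2⁻¹) := by
        rw [div_eq_iff hbne] at this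
        rw [this]
        field_simp
      exact Units.ext hval
    rw [if_neg hcond, mul_zero]
  · intro h
    exact absurd (Finset.mem_univ u) h
end

section
/- Let G be a finite group, H a subgroup of index 2, and V an irreducible representation of H over an algebraically closed field of characteristic 0 such that the two conjugates of V under G/H are non-isomorphic. If W is an irreducible representation of G whose restriction to H contains V, then W is isomorphic to the induced representation Ind_H^G(V). -/
theorem cliffordAux_ind_irred
    (k : Type*) [Field k]
    (G : Type*) [Group G] (H : Subgroup G) [hnorm : H.Normal]
    (hH : H.index = 2)
    (V : Type*) [AddCommGroup V] [Module k V]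
    (ρ : Representation k H V)
    (hVirr : ∀ U : Submodule k V, (∀ (h : H) (v : V), v ∈ U → ρ h v ∈ U) → U = ⊥ ∨ U = ⊤)
    (hconj : ∀ g : G, g ∉ H → ¬ ∃ e : V ≃ₗ[k] V, ∀ (h : H) (v : V),
        e (ρ h v) = ρ ⟨g * (h : G) * g⁻¹, hnorm.conj_mem (h : G) h.2 g⟩ (e v))
    (U : Submodule k (G → V))
    (hUN : ∀ f ∈ U, ∀ (h : H) (g : G), f ((h : G) * g) = ρ h (f g))
    (hUinv : ∀ f ∈ U, ∀ σ : G, (fun g => f (g * σ)) ∈ U)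
    (hUne : U ≠ ⊥) :
    ∀ f : G → V, (∀ (h : H) (g : G), f ((h : G) * g) = ρ h (f g)) → f ∈ U := by
  classical
  obtain ⟨g₀, hg₀⟩ : ∃ g₀ : G, g₀ ∉ H := by
    by_contra hc
    push_neg at hc
    have : H = ⊤ := Subgroup.eq_top_iff' H |>.mpr hc
    rw [this, Subgroup.index_top] at hH
    norm_num at hH
  have hsq : g₀ * g₀ ∈ H := Subgroup.mul_self_mem_of_index_two hH g₀
  have hzero : ∀ f : G → V, (∀ (h : H) (g : G), f ((h : G) * g) = ρ h (f g)) →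
      f 1 = 0 → f g₀ = 0 → f = 0 := by
    intro f hfN h1 h2
    funext g
    by_cases hg : g ∈ H
    · have := hfN ⟨g, hg⟩ 1
      simp only [mul_one] at this
      simp [this, h1]
    · have hmem : g * g₀⁻¹ ∈ H := by
        rw [Subgroup.mul_mem_iff_of_index_two hH]
        simp [hg, (by simpa using hg₀ : ¬ g₀⁻¹ ∈ H)]
      have := hfN ⟨g * g₀⁻¹, hmem⟩ g₀
      simp only [inv_mul_cancel_right] at this
      simp [this, h2]
  have heq : ∀ f f' : G → V, (∀ (h : H) (g : G), f ((h : G) * g) = ρ h (f g)) →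
      (∀ (h : H) (g : G), f' ((h : G) * g) = ρ h (f' g)) →
      f 1 = f' 1 → f g₀ = f' g₀ → f = f' := by
    intro f f' hf hf' h1 h2
    have := hzero (f - f') (by
      intro h g
      simp only [Pi.sub_apply, hf h g, hf' h g, map_sub]) (by simp [h1]) (by simp [h2])
    funext g
    have := congrFun this g
    simp only [Pi.sub_apply, Pi.zero_apply, sub_eq_zero] at this
    exact this
  set ev1 : (G → V) →ₗ[k] V := LinearMap.proj (1 : G) with hev1
  set ev2 : (G → V) →ₗ[k] V := LinearMap.proj g₀ with hev2
  -- translation keys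
  have key1 : ∀ f ∈ U, ∀ h : H, (fun g => f (g * (h : G))) 1 = ρ h (f 1) := by
    intro f hf h
    simp only [one_mul]
    simpa using hUN f hf h 1
  have hconjmem : ∀ h : H, g₀⁻¹ * (h : G) * g₀ ∈ H := by
    intro h
    have := hnorm.conj_mem (h : G) h.2 g₀⁻¹; simpa using this
  have hconjmem' : ∀ h : H, g₀ * (h : G) * g₀⁻¹ ∈ H := fun h => hnorm.conj_mem (h : G) h.2 g₀
  have key2 : ∀ f ∈ U, ∀ h : H, f (g₀ * (g₀⁻¹ * (h : G) * g₀)) = ρ h (f g₀) := by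
    intro f hf h
    have := hUN f hf h g₀
    have harr : g₀ * (g₀⁻¹ * (h : G) * g₀) = (h : G) * g₀ := by group
    rw [harr, this]
  have key3 : ∀ f ∈ U, ∀ h : H, f (g₀ * (h : G)) = ρ ⟨g₀ * (h : G) * g₀⁻¹, hconjmem' h⟩ (f g₀) := by
    intro f hf h
    have := hUN f hf ⟨g₀ * (h : G) * g₀⁻¹, hconjmem' h⟩ g₀
    simp only [inv_mul_cancel_right] at this
    exact this
  -- the four invariant subspaces
  have hU₁ : U.map ev1 = ⊥ ∨ U.map ev1 = ⊤ := by
    apply hVirr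
    rintro h v ⟨f, hf, rfl⟩
    exact ⟨fun g => f (g * (h : G)), hUinv f hf _, key1 f hf h⟩
  have hU₂ : U.map ev2 = ⊥ ∨ U.map ev2 = ⊤ := by
    apply hVirr
    rintro h v ⟨f, hf, rfl⟩
    exact ⟨fun g => f (g * (g₀⁻¹ * (h : G) * g₀)), hUinv f hf _, key2 f hf h⟩
  have hT₁ : (U ⊓ LinearMap.ker ev2).map ev1 = ⊥ ∨ (U ⊓ LinearMap.ker ev2).map ev1 = ⊤ := by
    apply hVirr
    rintro h v ⟨f, ⟨hf, hfk⟩, rfl⟩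
    refine ⟨fun g => f (g * (h : G)), ⟨hUinv f hf _, ?_⟩, key1 f hf h⟩
    simp only [SetLike.mem_coe, LinearMap.mem_ker] at hfk ⊢
    show f (g₀ * (h : G)) = 0
    rw [key3 f hf h]
    simp only [hev2, LinearMap.proj_apply] at hfk
    rw [hfk, map_zero]
  have hT₂ : (U ⊓ LinearMap.ker ev1).map ev2 = ⊥ ∨ (U ⊓ LinearMap.ker ev1).map ev2 = ⊤ := by
    apply hVirr
    rintro h v ⟨f, ⟨hf, hfk⟩, rfl⟩
    refine ⟨fun g => f (g * (g₀⁻¹ * (h : G) * g₀)), ⟨hUinv f hf _, ?_⟩, key2 f hf h⟩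
    simp only [SetLike.mem_coe, LinearMap.mem_ker] at hfk ⊢
    show f (1 * (g₀⁻¹ * (h : G) * g₀)) = 0
    simp only [one_mul]
    have := hUN f hf ⟨g₀⁻¹ * (h : G) * g₀, hconjmem h⟩ 1
    simp only [mul_one] at this
    simp only [hev1, LinearMap.proj_apply] at hfk
    rw [this, hfk, map_zero]
  -- bottom cases are impossible
  have hUne' : ∃ f₀, f₀ ∈ U ∧ f₀ ≠ 0 := by
    rcases Submodule.ne_bot_iff U |>.mp hUne with ⟨f₀, hf₀, hne⟩
    exact ⟨f₀, hf₀, hne⟩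
  have hU₁top : U.map ev1 = ⊤ := by
    rcases hU₁ with h | h
    · exfalso
      obtain ⟨f₀, hf₀, hne⟩ := hUne'
      apply hne
      apply hzero f₀ (hUN f₀ hf₀)
      · have : ev1 f₀ ∈ U.map ev1 := Submodule.mem_map_of_mem hf₀
        rw [h] at this; simpa [hev1] using this
      · have hmem : (fun g => f₀ (g * g₀)) ∈ U := hUinv f₀ hf₀ g₀
        have : ev1 (fun g => f₀ (g * g₀)) ∈ U.map ev1 := Submodule.mem_map_of_mem hmem
        rw [h] at this; simpa [hev1] using this
    · exact h
  have hU₂top : U.map ev2 = ⊤ := by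
    rcases hU₂ with h | h
    · exfalso
      obtain ⟨f₀, hf₀, hne⟩ := hUne'
      apply hne
      apply hzero f₀ (hUN f₀ hf₀)
      · have hmem : (fun g => f₀ (g * g₀⁻¹)) ∈ U := hUinv f₀ hf₀ g₀⁻¹
        have : ev2 (fun g => f₀ (g * g₀⁻¹)) ∈ U.map ev2 := Submodule.mem_map_of_mem hmem
        rw [h] at this; simpa [hev2] using this
      · have : ev2 f₀ ∈ U.map ev2 := Submodule.mem_map_of_mem hf₀
        rw [h] at this; simpa [hev2] using this
    · exact h
  intro f₀ hf₀N
  have hρinv : ∀ (h : H) (v : V), ρ h (ρ h⁻¹ v) = v := by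
    intro h v
    rw [← Module.End.mul_apply, ← map_mul, mul_inv_cancel, map_one, Module.End.one_apply]
  rcases hT₁ with hT₁b | hT₁t
  · rcases hT₂ with hT₂b | hT₂t
    · -- both graphs trivial: forbidden isomorphism
      exfalso
      have hinj1 : ∀ f ∈ U, f 1 = 0 → f = 0 := by
        intro f hf h1
        apply hzero f (hUN f hf) h1
        have : ev2 f ∈ Submodule.map ev2 (U ⊓ LinearMap.ker ev1) :=
          Submodule.mem_map_of_mem (Submodule.mem_inf.mpr
            ⟨hf, LinearMap.mem_ker.mpr (by simp [hev1, h1])⟩)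
        rw [hT₂b] at this
        simpa [hev2] using this
      have hinj2 : ∀ f ∈ U, f g₀ = 0 → f = 0 := by
        intro f hf h2
        refine hzero f (hUN f hf) ?_ h2
        have : ev1 f ∈ Submodule.map ev1 (U ⊓ LinearMap.ker ev2) :=
          Submodule.mem_map_of_mem (Submodule.mem_inf.mpr
            ⟨hf, LinearMap.mem_ker.mpr (by simp [hev2, h2])⟩)
        rw [hT₁b] at this
        simpa [hev1] using this
      set φ : ↥U →ₗ[k] V := ev1.comp U.subtype with hφ
      have hφinj : Function.Injective φ := by
        rw [← LinearMap.ker_eq_bot, LinearMap.ker_eq_bot']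
        intro x hx
        have hx0 : (x : G → V) = 0 := by
          apply hinj1 _ x.2
          simpa [hφ, hev1] using hx
        exact Subtype.ext hx0
      have hφsurj : Function.Surjective φ := by
        intro v
        have : v ∈ Submodule.map ev1 U := by rw [hU₁top]; trivial
        rcases this with ⟨f, hfU, hfv⟩
        exact ⟨⟨f, hfU⟩, hfv⟩
      set ψ := LinearEquiv.ofBijective φ ⟨hφinj, hφsurj⟩ with hψ
      set E0 : V →ₗ[k] V := (ev2.comp U.subtype).comp ψ.symm.toLinearMap with hE0
      have hsymm : ∀ (f : G → V) (hf : f ∈ U), ψ.symm (f 1) = ⟨f, hf⟩ := by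
        intro f hf
        have h1 : ψ ⟨f, hf⟩ = f 1 := rfl
        rw [← h1, LinearEquiv.symm_apply_apply]
      have hE0val : ∀ (f : G → V) (hf : f ∈ U), E0 (f 1) = f g₀ := by
        intro f hf
        rw [hE0]
        simp only [LinearMap.comp_apply, LinearEquiv.coe_coe]
        rw [hsymm f hf]
        simp [hev2]
      have hE0inj : Function.Injective E0 := by
        rw [← LinearMap.ker_eq_bot, LinearMap.ker_eq_bot']
        intro v hv
        obtain ⟨x, hx⟩ := hφsurj v
        have hx1 : (x : G → V) 1 = v := by simpa [hφ, hev1] using hx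
        have hx2 : (x : G → V) g₀ = 0 := by
          rw [← hE0val _ x.2, hx1]; exact hv
        have : (x : G → V) = 0 := hinj2 _ x.2 hx2
        rw [← hx1, this]
        simp
      have hE0surj : Function.Surjective E0 := by
        intro w
        have : w ∈ Submodule.map ev2 U := by rw [hU₂top]; trivial
        rcases this with ⟨f, hfU, hfw⟩
        refine ⟨f 1, ?_⟩
        rw [hE0val f hfU]
        simpa [hev2] using hfw
      refine hconj g₀ hg₀ ⟨LinearEquiv.ofBijective E0 ⟨hE0inj, hE0surj⟩, ?_⟩
      intro h v
      show E0 (ρ h v) = ρ _ (E0 v)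
      obtain ⟨x, hx⟩ := hφsurj v
      have hx1 : (x : G → V) 1 = v := by simpa [hφ, hev1] using hx
      have hf'U : (fun g => (x : G → V) (g * (h : G))) ∈ U := hUinv _ x.2 _
      have hf'1 : (fun g => (x : G → V) (g * (h : G))) 1 = ρ h v := by
        rw [key1 _ x.2 h, hx1]
      have h1 : E0 (ρ h v) = (fun g => (x : G → V) (g * (h : G))) g₀ := by
        rw [← hf'1, hE0val _ hf'U]
      have h2 : (fun g => (x : G → V) (g * (h : G))) g₀
          = ρ ⟨g₀ * (h : G) * g₀⁻¹, hconjmem' h⟩ ((x : G → V) g₀) := key3 _ x.2 h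
      have h3 : E0 v = (x : G → V) g₀ := by rw [← hx1, hE0val _ x.2]
      rw [h1, h2, h3]
    · -- T₂ = ⊤
      have hget : ∀ v : V, ∃ f, f ∈ U ∧ f 1 = 0 ∧ f g₀ = v := by
        intro v
        have : v ∈ Submodule.map ev2 (U ⊓ LinearMap.ker ev1) := by rw [hT₂t]; trivial
        rcases this with ⟨f, hfm, hfv⟩
        rcases Submodule.mem_inf.mp hfm with ⟨hfU, hfk⟩
        exact ⟨f, hfU, by simpa [hev1] using LinearMap.mem_ker.mp hfk,
          by simpa [hev2] using hfv⟩
      obtain ⟨fb, hfbU, hfb1, hfb2⟩ := hget (f₀ g₀)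
      obtain ⟨fc, hfcU, hfc1, hfc2⟩ := hget (f₀ 1)
      have hfaU : (fun g => fc (g * g₀)) ∈ U := hUinv fc hfcU g₀
      have hfa1 : (fun g => fc (g * g₀)) 1 = f₀ 1 := by simpa using hfc2
      have hfa2 : (fun g => fc (g * g₀)) g₀ = 0 := by
        show fc (g₀ * g₀) = 0
        have := hUN fc hfcU ⟨g₀ * g₀, hsq⟩ 1
        simp only [mul_one] at this
        rw [this, hfc1, map_zero]
      have hsum : f₀ = (fun g => fc (g * g₀)) + fb := by
        refine heq _ _ hf₀N (hUN _ (U.add_mem hfaU hfbU)) ?_ ?_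
        · simp only [Pi.add_apply, hfa1, hfb1, add_zero]
        · simp only [Pi.add_apply, hfa2, hfb2, zero_add]
      rw [hsum]
      exact U.add_mem hfaU hfbU
  · -- T₁ = ⊤
    have hget : ∀ v : V, ∃ f, f ∈ U ∧ f g₀ = 0 ∧ f 1 = v := by
      intro v
      have : v ∈ Submodule.map ev1 (U ⊓ LinearMap.ker ev2) := by rw [hT₁t]; trivial
      rcases this with ⟨f, hfm, hfv⟩
      rcases Submodule.mem_inf.mp hfm with ⟨hfU, hfk⟩
      exact ⟨f, hfU, by simpa [hev2] using LinearMap.mem_ker.mp hfk,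
        by simpa [hev1] using hfv⟩
    obtain ⟨fa, hfaU, hfa2, hfa1⟩ := hget (f₀ 1)
    obtain ⟨fc, hfcU, hfc2, hfc1⟩ := hget (ρ (⟨g₀ * g₀, hsq⟩ : H)⁻¹ (f₀ g₀))
    have hfbU : (fun g => fc (g * g₀)) ∈ U := hUinv fc hfcU g₀
    have hfb1 : (fun g => fc (g * g₀)) 1 = 0 := by simpa using hfc2
    have hfb2 : (fun g => fc (g * g₀)) g₀ = f₀ g₀ := by
      show fc (g₀ * g₀) = f₀ g₀
      have := hUN fc hfcU ⟨g₀ * g₀, hsq⟩ 1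
      simp only [mul_one] at this
      rw [this, hfc1, hρinv]
    have hsum : f₀ = fa + (fun g => fc (g * g₀)) := by
      refine heq _ _ hf₀N (hUN _ (U.add_mem hfaU hfbU)) ?_ ?_
      · simp only [Pi.add_apply, hfa1, hfb1, add_zero]
      · simp only [Pi.add_apply, hfa2, hfb2, zero_add]
    rw [hsum]
    exact U.add_mem hfaU hfbU



/-- Clifford-theory statement: if `H ≤ G` has index 2, `V` is an irreducible
`H`-representation whose conjugate by any `g ∉ H` is not isomorphic to `V`, and `W` is an
irreducible `G`-representation whose restriction to `H` contains `V`, then `W` is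
isomorphic to the induced representation `Ind_H^G(V)` (realized as the space of functions
`f : G → V` with `f(hg) = ρ(h) f(g)`, with `G` acting by right translation). -/
theorem irreducible_restriction_induced
    (k : Type*) [Field k] [IsAlgClosed k] [CharZero k]
    (G : Type*) [Group G] [Fintype G] (H : Subgroup G) [hnorm : H.Normal]
    (hH : H.index = 2)
    (V W : Type*) [AddCommGroup V] [Module k V] [AddCommGroup W] [Module k W]
    (ρ : Representation k H V) (ρW : Representation k G W)
    (hVirr : ∀ U : Submodule k V, (∀ (h : H) (v : V), v ∈ U → ρ h v ∈ U) → U = ⊥ ∨ U = ⊤)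
    (hWirr : ∀ U : Submodule k W, (∀ (g : G) (w : W), w ∈ U → ρW g w ∈ U) → U = ⊥ ∨ U = ⊤)
    (hconj : ∀ g : G, g ∉ H → ¬ ∃ e : V ≃ₗ[k] V, ∀ (h : H) (v : V),
        e (ρ h v) = ρ ⟨g * (h : G) * g⁻¹, hnorm.conj_mem (h : G) h.2 g⟩ (e v))
    (ι : V →ₗ[k] W) (hι : Function.Injective ι)
    (hιequiv : ∀ (h : H) (v : V), ι (ρ h v) = ρW (h : G) (ι v)) :
    ∃ e : W →ₗ[k] (G → V), Function.Injective e ∧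
      (∀ (σ : G) (w : W) (g : G), e (ρW σ w) g = e w (g * σ)) ∧
      Set.range (fun w => e w)
        = {f : G → V | ∀ (h : H) (g : G), f ((h : G) * g) = ρ h (f g)} := by
  classical
  haveI : Fintype H := Fintype.ofFinite H
  obtain ⟨g₀, hg₀⟩ : ∃ g₀ : G, g₀ ∉ H := by
    by_contra hc
    push_neg at hc
    have : H = ⊤ := Subgroup.eq_top_iff' H |>.mpr hc
    rw [this, Subgroup.index_top] at hH
    norm_num at hH
  have hVnt : ∃ v : V, v ≠ 0 := by
    by_contra hc
    push_neg at hc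
    refine hconj g₀ hg₀ ⟨LinearEquiv.refl k V, fun h v => ?_⟩
    exact (hc _).trans (hc _).symm
  have hcard : (Fintype.card H : k) ≠ 0 := Nat.cast_ne_zero.mpr Fintype.card_ne_zero
  obtain ⟨p₀, hp₀⟩ := LinearMap.exists_leftInverse_of_injective ι (LinearMap.ker_eq_bot.mpr hι)
  set p : W →ₗ[k] V :=
    (Fintype.card H : k)⁻¹ • (∑ h : H, (ρ h) ∘ₗ (p₀ ∘ₗ (ρW ((h : G)⁻¹)))) with hpdef
  have hρinv : ∀ (h : H) (v : V), ρ h (ρ h⁻¹ v) = v := by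
    intro h v
    rw [← Module.End.mul_apply, ← map_mul, mul_inv_cancel, map_one, Module.End.one_apply]
  have hpι : ∀ v : V, p (ι v) = v := by
    intro v
    rw [hpdef]
    simp only [LinearMap.smul_apply, LinearMap.coe_sum, Finset.sum_apply,
      LinearMap.comp_apply]
    have hterm : ∀ h : H, ρ h (p₀ (ρW ((h : G)⁻¹) (ι v))) = v := by
      intro h
      have h1 : ρW ((h : G)⁻¹) (ι v) = ι (ρ h⁻¹ v) := by
        rw [hιequiv h⁻¹ v]
        rfl
      rw [h1]
      have h2 : p₀ (ι (ρ h⁻¹ v)) = ρ h⁻¹ v := by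
        have := LinearMap.congr_fun hp₀ (ρ h⁻¹ v)
        simpa using this
      rw [h2, hρinv]
    rw [Finset.sum_congr rfl (fun h _ => hterm h), Finset.sum_const, Finset.card_univ]
    rw [← Nat.cast_smul_eq_nsmul k, smul_smul, inv_mul_cancel₀ hcard, one_smul]
  have hp : ∀ (h₀ : H) (w : W), p (ρW (h₀ : G) w) = ρ h₀ (p w) := by
    intro h₀ w
    rw [hpdef]
    simp only [LinearMap.smul_apply, LinearMap.coe_sum, Finset.sum_apply,
      LinearMap.comp_apply, map_smul, map_sum]
    congr 1
    refine Fintype.sum_equiv (Equiv.mulLeft h₀⁻¹) _ _ ?_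
    intro h
    simp only [Equiv.coe_mulLeft]
    have e1 : ρW ((h : G))⁻¹ (ρW (h₀ : G) w) = ρW (((h₀⁻¹ * h : H) : G))⁻¹ w := by
      rw [← Module.End.mul_apply, ← map_mul]
      congr 1
      push_cast
      group
    rw [e1, ← Module.End.mul_apply (ρ h₀), ← map_mul]
    congr 1
    group
  set e : W →ₗ[k] (G → V) := LinearMap.pi (fun g => p ∘ₗ (ρW g)) with hedef
  have heapp : ∀ (w : W) (g : G), e w g = p (ρW g w) := by
    intro w g
    rw [hedef]
    simp [LinearMap.pi_apply]
  have hequiv : ∀ (σ : G) (w : W) (g : G), e (ρW σ w) g = e w (g * σ) := by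
    intro σ w g
    rw [heapp, heapp, ← Module.End.mul_apply, ← map_mul]
  have hN : ∀ w : W, ∀ (h : H) (g : G), (e w) ((h : G) * g) = ρ h (e w g) := by
    intro w h g
    rw [heapp, heapp, map_mul, Module.End.mul_apply, hp]
  have hkerinv : ∀ (g : G) (w : W), w ∈ LinearMap.ker e → ρW g w ∈ LinearMap.ker e := by
    intro g w hw
    rw [LinearMap.mem_ker] at hw ⊢
    funext g'
    have := hequiv g w g'
    rw [hw] at this
    simpa using this
  have heinj : Function.Injective e := by
    rw [← LinearMap.ker_eq_bot]
    rcases hWirr (LinearMap.ker e) hkerinv with hbot | htop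
    · exact hbot
    · exfalso
      obtain ⟨v, hv⟩ := hVnt
      apply hv
      have h0 : ι v ∈ LinearMap.ker e := by rw [htop]; trivial
      rw [LinearMap.mem_ker] at h0
      have h1 : e (ι v) 1 = 0 := by rw [h0]; rfl
      rw [heapp, map_one ρW, Module.End.one_apply, hpι] at h1
      exact h1
  refine ⟨e, heinj, hequiv, ?_⟩
  ext f
  simp only [Set.mem_range, Set.mem_setOf_eq]
  constructor
  · rintro ⟨w, rfl⟩
    exact hN w
  · intro hf
    have hmem : f ∈ LinearMap.range e := by
      refine cliffordAux_ind_irred k G H hH V ρ hVirr hconj (LinearMap.range e)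
        ?_ ?_ ?_ f hf
      · rintro f' ⟨w, rfl⟩ h g
        exact hN w h g
      · rintro f' ⟨w, rfl⟩ σ
        exact ⟨ρW σ w, by funext g; rw [hequiv]⟩
      · obtain ⟨v, hv⟩ := hVnt
        rw [Submodule.ne_bot_iff]
        refine ⟨e (ι v), LinearMap.mem_range_self _ _, fun h0 => hv ?_⟩
        have h1 : e (ι v) 1 = 0 := by rw [h0]; rfl
        rw [heapp, map_one ρW, Module.End.one_apply, hpι] at h1
        exact h1
    rcases hmem with ⟨w, hw⟩
    exact ⟨w, hw⟩
end
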